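/- A relatively algebraically closed subfield of a henselian valued field is itself henselian (with the restricted valuation). -/

import Mathlib

universe u u' v

namespace VFD

variable {K : Type u} {L : Type v} [Field K] [Field L]
variable {Γ : Type*} [LinearOrderedCommGroupWithZero Γ]

/-- The value group of a valuation `v` on a field, as a subgroup of `Γˣ`:
the subgroup generated by all nonzero values of `v`. -/
def valueGroup (v : Valuation K Γ) : Subgroup Γˣ :=
  Subgroup.closure { γ : Γˣ | ∃ x : K, v x = γ }

/-- The ramification index `(v L : v K)` of an extension of valued fields along `ι`. -/
noncomputable def ramIdx (ι : K →+* L) (vL : Valuation L Γ) : ℕ :=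
  Subgroup.relIndex (valueGroup (vL.comap ι)) (valueGroup vL)

/-- The induced ring homomorphism between valuation rings. -/
def intHom (ι : K →+* L) (vL : Valuation L Γ) :
    (vL.comap ι).valuationSubring →+* vL.valuationSubring where
  toFun x := ⟨ι x, x.2⟩
  map_one' := by ext; simp
  map_mul' x y := by ext; simp
  map_zero' := by ext; simp
  map_add' x y := by ext; simp

theorem isLocalHom_intHom (ι : K →+* L) (vL : Valuation L Γ) :
    IsLocalHom (intHom ι vL) := by
  constructor
  intro a ha
  have hK : (vL.comap ι).Integers (vL.comap ι).valuationSubring :=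
    { hom_inj := Subtype.coe_injective
      map_le_one := fun r => r.2
      exists_of_le_one := fun r hr => ⟨⟨r, hr⟩, rfl⟩ }
  have hL : vL.Integers vL.valuationSubring :=
    { hom_inj := Subtype.coe_injective
      map_le_one := fun r => r.2
      exists_of_le_one := fun r hr => ⟨⟨r, hr⟩, rfl⟩ }
  rw [hK.isUnit_iff_valuation_eq_one]
  exact hL.isUnit_iff_valuation_eq_one.mp ha

/-- The induced homomorphism between residue fields. -/
noncomputable def resMap (ι : K →+* L) (vL : Valuation L Γ) :
    IsLocalRing.ResidueField (vL.comap ι).valuationSubring →+*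
      IsLocalRing.ResidueField vL.valuationSubring :=
  letI := isLocalHom_intHom ι vL
  IsLocalRing.ResidueField.map (intHom ι vL)

/-- The residue degree `[Lv : Kv]` of an extension of valued fields. -/
noncomputable def resDeg (ι : K →+* L) (vL : Valuation L Γ) : ℕ :=
  letI := (resMap ι vL).toAlgebra
  Module.finrank (IsLocalRing.ResidueField (vL.comap ι).valuationSubring)
    (IsLocalRing.ResidueField vL.valuationSubring)

/-- The defect `d(L|K,v) = [L:K] / ((vL : vK) [Lv : Kv])` of a finite extension of
valued fields (by the Lemma of Ostrowski the division is exact for finite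
unibranched extensions). -/
noncomputable def defect (ι : K →+* L) (vL : Valuation L Γ) : ℕ :=
  (letI := ι.toAlgebra; Module.finrank K L) / (ramIdx ι vL * resDeg ι vL)

/-- An extension of valued fields is unibranched if the valuation (subring) on `L`
is the unique one lying over the given valuation (subring) of `K`. -/
def Unibranched (ι : K →+* L) (vL : Valuation L Γ) : Prop :=
  ∀ B : ValuationSubring L, B.comap ι = vL.valuationSubring.comap ι →
    B = vL.valuationSubring

/-- An extension of valued fields is immediate if it induces no extension of the
value group nor of the residue field. -/
def IsImmediate (ι : K →+* L) (vL : Valuation L Γ) : Prop :=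
  (∀ y : L, ∃ x : K, vL (ι x) = vL y) ∧
    (∀ y : L, vL y ≤ 1 → ∃ x : K, vL (y - ι x) < 1)

/-- A valued field is maximal if it admits no proper immediate extension. -/
def IsMaximalValued (vK : Valuation K Γ) : Prop :=
  ∀ (L : Type u) [Field L] (ι : K →+* L) (Γ' : Type u')
    [LinearOrderedCommGroupWithZero Γ'] (vL : Valuation L Γ'),
    (vL.comap ι).IsEquiv vK → IsImmediate ι vL → Function.Surjective ι

/-- A valued field is algebraically maximal if it admits no proper immediate
algebraic extension. -/
def IsAlgMaximal (vK : Valuation K Γ) : Prop :=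
  ∀ (L : Type u) [Field L] (ι : K →+* L) (Γ' : Type u')
    [LinearOrderedCommGroupWithZero Γ'] (vL : Valuation L Γ'),
    (∀ y : L, letI := ι.toAlgebra; IsAlgebraic K y) →
    (vL.comap ι).IsEquiv vK → IsImmediate ι vL → Function.Surjective ι

/-- A henselian valued field is defectless if every finite unibranched extension
has defect 1. -/
def IsDefectless (vK : Valuation K Γ) : Prop :=
  ∀ (L : Type u) [Field L] (ι : K →+* L) (Γ' : Type u')
    [LinearOrderedCommGroupWithZero Γ'] (vL : Valuation L Γ'),
    (letI := ι.toAlgebra; FiniteDimensional K L) →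
    (vL.comap ι).IsEquiv vK → Unibranched ι vL → defect ι vL = 1

/-- A valued field is inseparably defectless if every finite purely inseparable
extension has defect 1. -/
def IsInsepDefectless (vK : Valuation K Γ) : Prop :=
  ∀ (L : Type u) [Field L] (ι : K →+* L) (Γ' : Type u')
    [LinearOrderedCommGroupWithZero Γ'] (vL : Valuation L Γ'),
    (letI := ι.toAlgebra; FiniteDimensional K L) →
    (letI := ι.toAlgebra; IsPurelyInseparable K L) →
    (vL.comap ι).IsEquiv vK → Unibranched ι vL → defect ι vL = 1

/-- A valuation is discrete if its value group is a nontrivial cyclic group. -/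
def IsDiscreteValued (v : Valuation K Γ) : Prop :=
  ∃ γ : Γˣ, γ ≠ 1 ∧ valueGroup v = Subgroup.zpowers γ

/-- A valued field is henselian if its valuation ring is a henselian local ring. -/
abbrev IsHenselianValued (v : Valuation K Γ) : Prop :=
  HenselianLocalRing v.valuationSubring

end VFD

/-- A relatively algebraically closed subfield of a henselian valued field is
itself henselian (with the restricted valuation). -/
theorem henselian_of_relatively_algebraically_closed
    {F : Type u} [Field F] {Γ : Type u'} [LinearOrderedCommGroupWithZero Γ]
    (v : Valuation F Γ) (hF : VFD.IsHenselianValued v)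
    (L : Subfield F) (hrel : ∀ x : F, IsAlgebraic L x → x ∈ L) :
    VFD.IsHenselianValued (v.comap L.subtype) := by
  set O := (v.comap L.subtype).valuationSubring with hO
  let φ : O →+* v.valuationSubring := VFD.intHom L.subtype v
  haveI := VFD.isLocalHom_intHom L.subtype v
  refine { is_henselian := ?_ }
  intro f hf a₀ h₀ h₁
  obtain ⟨a, haroot, hamem⟩ := hF.is_henselian (f.map φ) (hf.map φ) (φ a₀)
    (by
      rw [Polynomial.eval_map, Polynomial.eval₂_hom, IsLocalRing.mem_maximalIdeal,
        mem_nonunits_iff]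
      intro hu
      exact (mem_nonunits_iff.mp ((IsLocalRing.mem_maximalIdeal _).mp h₀))
        (isUnit_of_map_unit φ _ hu))
    (by rw [Polynomial.derivative_map, Polynomial.eval_map, Polynomial.eval₂_hom]
        exact h₁.map φ)
  have hcomp : (v.valuationSubring.subtype).comp φ
      = (L.subtype).comp O.subtype := by
    ext x; rfl
  have h0F : Polynomial.eval₂ ((L.subtype).comp O.subtype) (a : F) f = 0 := by
    have h0 : v.valuationSubring.subtype ((f.map φ).eval a) = 0 := by
      rw [haroot]; simp
    rw [Polynomial.eval_map, Polynomial.hom_eval₂] at h0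
    rw [← hcomp]
    simpa using h0
  have key : ((a : F)) ∈ L := by
    apply hrel
    refine ⟨f.map O.subtype, (hf.map O.subtype).ne_zero, ?_⟩
    rw [Polynomial.aeval_def, Polynomial.eval₂_map]
    exact h0F
  refine ⟨⟨⟨(a : F), key⟩, a.2⟩, ?_, ?_⟩
  · have hinj : Function.Injective ((L.subtype).comp O.subtype) :=
      (L.subtype.injective).comp Subtype.coe_injective
    apply hinj
    rw [map_zero, ← Polynomial.eval₂_hom]
    exact h0F
  · rw [IsLocalRing.mem_maximalIdeal, mem_nonunits_iff]
    intro hu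
    have h2 : IsUnit (a - φ a₀) := by
      have h3 := hu.map φ
      rwa [RingHom.map_sub φ] at h3
    exact (mem_nonunits_iff.mp ((IsLocalRing.mem_maximalIdeal _).mp hamem)) h2
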